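/- arXiv:2205.14488 — 2 statements merged into one kernel-verified Lean document; each statement's English description precedes it below -/
import Mathlib

section
/- Let N ≥ 1, s, ε ∈ ℝ, u₀(x) = N^{-s-ε}(cos(Nx) + cos(2Nx)) on the one-dimensional torus, and let v(t) = e^{tΔ}u₀. Then the spatial mean of v(t)³ equals (3/4) N^{-3s-3ε} e^{-6tN²} for every t ≥ 0. -/
open Real

/-- The spatial mean of the cube of the linear heat evolution
`v(t) = e^{tΔ}u₀` of `u₀(x) = N^{-s-ε}(cos(Nx) + cos(2Nx))` on the one-dimensional
torus, where `e^{tΔ}` multiplies the mode `cos(kx)` by `e^{-tk²}`. -/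
theorem mean_of_cubed_linear_solution (N : ℕ) (hN : 1 ≤ N) (s ε : ℝ)
    (v : ℝ → ℝ → ℝ)
    (hv : ∀ t x, v t x = (N : ℝ) ^ (-s - ε) *
      (Real.exp (-t * (N : ℝ) ^ 2) * Real.cos ((N : ℝ) * x)
        + Real.exp (-t * (2 * (N : ℝ)) ^ 2) * Real.cos (2 * (N : ℝ) * x)))
    (t : ℝ) (ht : 0 ≤ t) :
    (1 / (2 * π)) * ∫ x in (0 : ℝ)..(2 * π), (v t x) ^ 3
      = (3 / 4) * (N : ℝ) ^ (-3 * s - 3 * ε) * Real.exp (-6 * t * (N : ℝ) ^ 2) := by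
  have hNpos : (0:ℝ) < N := by exact_mod_cast hN
  have hN0 : (N:ℝ) ≠ 0 := ne_of_gt hNpos
  set A : ℝ := (N : ℝ) ^ (-s - ε) * Real.exp (-t * (N : ℝ) ^ 2) with hA
  set B : ℝ := (N : ℝ) ^ (-s - ε) * Real.exp (-t * (2 * (N : ℝ)) ^ 2) with hB
  set Q : ℝ → ℝ := fun c =>
      (2/3*A^3 + 7/5*A*B^2) + (3/4*A^2*B + B^3)*c + (1/3*A^3 - 4/5*A*B^2)*c^2
        + (3/2*A^2*B - 4/3*B^3)*c^3 + (12/5*A*B^2)*c^4 + (4/3*B^3)*c^5 with hQ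
  set F : ℝ → ℝ := fun x =>
      (3/4)*A^2*B*x + (1/(N:ℝ)) * (Real.sin ((N:ℝ)*x) * Q (Real.cos ((N:ℝ)*x))) with hF
  have hgx : ∀ x, v t x = A * Real.cos ((N:ℝ)*x) + B * Real.cos (2*(N:ℝ)*x) := by
    intro x; rw [hv]; ring
  -- derivative of F
  have key : ∀ x : ℝ, HasDerivAt F
      ((A * Real.cos ((N:ℝ)*x) + B * Real.cos (2*(N:ℝ)*x))^3) x := by
    intro x
    have hid : HasDerivAt (fun y : ℝ => (N:ℝ) * y) (N:ℝ) x := by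
      simpa using (hasDerivAt_id x).const_mul (N:ℝ)
    have hsin : HasDerivAt (fun y : ℝ => Real.sin ((N:ℝ)*y))
        (Real.cos ((N:ℝ)*x) * (N:ℝ)) x :=
      (Real.hasDerivAt_sin ((N:ℝ)*x)).comp x hid
    have hcos : HasDerivAt (fun y : ℝ => Real.cos ((N:ℝ)*y))
        (-Real.sin ((N:ℝ)*x) * (N:ℝ)) x :=
      (Real.hasDerivAt_cos ((N:ℝ)*x)).comp x hid
    have hQd : HasDerivAt Q
        ((3/4*A^2*B + B^3)*1 + (1/3*A^3 - 4/5*A*B^2)*(2*Real.cos ((N:ℝ)*x))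
          + (3/2*A^2*B - 4/3*B^3)*(3*Real.cos ((N:ℝ)*x)^2)
          + (12/5*A*B^2)*(4*Real.cos ((N:ℝ)*x)^3)
          + (4/3*B^3)*(5*Real.cos ((N:ℝ)*x)^4)) (Real.cos ((N:ℝ)*x)) := by
      have h := (((((hasDerivAt_const (Real.cos ((N:ℝ)*x)) (2/3*A^3 + 7/5*A*B^2)).add
          ((hasDerivAt_id (Real.cos ((N:ℝ)*x))).const_mul (3/4*A^2*B + B^3))).add
          ((hasDerivAt_pow 2 (Real.cos ((N:ℝ)*x))).const_mul (1/3*A^3 - 4/5*A*B^2))).add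
          ((hasDerivAt_pow 3 (Real.cos ((N:ℝ)*x))).const_mul (3/2*A^2*B - 4/3*B^3))).add
          ((hasDerivAt_pow 4 (Real.cos ((N:ℝ)*x))).const_mul (12/5*A*B^2))).add
          ((hasDerivAt_pow 5 (Real.cos ((N:ℝ)*x))).const_mul (4/3*B^3))
      refine h.congr_deriv ?_
      push_cast
      ring
    have hcomp := hQd.comp x hcos
    have hFd := ((hasDerivAt_id x).const_mul ((3/4)*A^2*B)).add
      ((hsin.mul hcomp).const_mul (1/(N:ℝ)))
    refine hFd.congr_deriv (Eq.symm ?_)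
    simp only [Function.comp_apply, Function.comp, hQ]
    have h2 : Real.cos (2*(N:ℝ)*x) = 2*Real.cos ((N:ℝ)*x)^2 - 1 := by
      rw [show 2*(N:ℝ)*x = 2*((N:ℝ)*x) by ring, Real.cos_two_mul]
    have hsq : Real.sin ((N:ℝ)*x)^2 = 1 - Real.cos ((N:ℝ)*x)^2 := Real.sin_sq _
    have hinv : (1/(N:ℝ)) * (N:ℝ) = 1 := by field_simp
    rw [h2]
    linear_combination
      (-(Real.cos ((N:ℝ)*x) * ((2/3*A^3 + 7/5*A*B^2)
          + (3/4*A^2*B + B^3)*Real.cos ((N:ℝ)*x)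
          + (1/3*A^3 - 4/5*A*B^2)*Real.cos ((N:ℝ)*x)^2
          + (3/2*A^2*B - 4/3*B^3)*Real.cos ((N:ℝ)*x)^3
          + (12/5*A*B^2)*Real.cos ((N:ℝ)*x)^4
          + (4/3*B^3)*Real.cos ((N:ℝ)*x)^5)
        - Real.sin ((N:ℝ)*x)^2 * ((3/4*A^2*B + B^3)
          + (1/3*A^3 - 4/5*A*B^2)*(2*Real.cos ((N:ℝ)*x))
          + (3/2*A^2*B - 4/3*B^3)*(3*Real.cos ((N:ℝ)*x)^2)
          + (12/5*A*B^2)*(4*Real.cos ((N:ℝ)*x)^3)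
          + (4/3*B^3)*(5*Real.cos ((N:ℝ)*x)^4)))) * hinv
      + ((3/4*A^2*B + B^3)
          + (1/3*A^3 - 4/5*A*B^2)*(2*Real.cos ((N:ℝ)*x))
          + (3/2*A^2*B - 4/3*B^3)*(3*Real.cos ((N:ℝ)*x)^2)
          + (12/5*A*B^2)*(4*Real.cos ((N:ℝ)*x)^3)
          + (4/3*B^3)*(5*Real.cos ((N:ℝ)*x)^4)) * hsq
  -- compute the integral
  have hcont : Continuous fun x : ℝ =>
      (A * Real.cos ((N:ℝ)*x) + B * Real.cos (2*(N:ℝ)*x))^3 := by fun_prop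
  have hint : (∫ x in (0:ℝ)..(2*π), (v t x)^3)
      = ∫ x in (0:ℝ)..(2*π), (A * Real.cos ((N:ℝ)*x) + B * Real.cos (2*(N:ℝ)*x))^3 := by
    apply intervalIntegral.integral_congr
    intro x _
    simp only [hgx]
  rw [hint, intervalIntegral.integral_eq_sub_of_hasDerivAt (fun x _ => key x)
    (hcont.intervalIntegrable 0 (2*π))]
  have hs2 : Real.sin ((N:ℝ)*(2*π)) = 0 := by
    rw [show (N:ℝ)*(2*π) = (2*N : ℕ)*π by push_cast; ring]
    exact Real.sin_nat_mul_pi (2*N)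
  have hFval : F (2*π) - F 0 = (3/4)*A^2*B*(2*π) := by
    simp [hF, hs2]
  rw [hFval]
  have hpi : (2*π) ≠ 0 := by positivity
  have e1 : ((N:ℝ)^(-s-ε))^(3:ℕ) = (N:ℝ)^(-3*s-3*ε) := by
    rw [← Real.rpow_natCast ((N:ℝ)^(-s-ε)) 3, ← Real.rpow_mul hNpos.le]
    norm_num
    ring_nf
  have e2 : Real.exp (-t*(N:ℝ)^2)^2 * Real.exp (-t*(2*(N:ℝ))^2)
      = Real.exp (-6*t*(N:ℝ)^2) := by
    rw [sq, ← Real.exp_add, ← Real.exp_add]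
    congr 1
    ring
  have : A^2*B = (N:ℝ)^(-3*s-3*ε) * Real.exp (-6*t*(N:ℝ)^2) := by
    rw [hA, hB, ← e1, ← e2]
    ring
  have hgoal : 1/(2*π) * ((3/4)*A^2*B*(2*π)) = 3/4*(A^2*B) := by
    field_simp
  rw [hgoal, this]
  ring
end

section
/- Let N ≥ 1 and u₀(x) = N^{-s-ε}(cos(Nx) + cos(2Nx)) on the one-dimensional torus. Then the spatial mean of the second Picard iterate Ξ₁(u₀)(t) = ∫₀ᵗ e^{(t-t')Δ}(e^{t'Δ}u₀)³ dt' equals (1/8) N^{-2-3s-3ε} (1 - e^{-6tN²}) for every t ≥ 0. -/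
open Real

lemma cos4' (θ : ℝ) : Real.cos (4*θ) = 8*(cos θ)^4 - 8*(cos θ)^2 + 1 := by
  rw [show (4:ℝ)*θ = 2*(2*θ) by ring, Real.cos_two_mul, Real.cos_two_mul]; ring

lemma cos6' (θ : ℝ) : Real.cos (6*θ) = 32*(cos θ)^6 - 48*(cos θ)^4 + 18*(cos θ)^2 - 1 := by
  rw [show (6:ℝ)*θ = 2*(3*θ) by ring, Real.cos_two_mul, Real.cos_three_mul]; ring

lemma cos5' (θ : ℝ) : Real.cos (5*θ) = 16*(cos θ)^5 - 20*(cos θ)^3 + 5*cos θ := by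
  have hs : Real.sin θ ^ 2 = 1 - Real.cos θ ^ 2 := Real.sin_sq θ
  rw [show (5:ℝ)*θ = 2*θ + 3*θ by ring, Real.cos_add, Real.cos_two_mul, Real.sin_two_mul,
    Real.cos_three_mul, Real.sin_three_mul]
  linear_combination (-6*Real.cos θ + 8*Real.cos θ*(Real.sin θ^2 + 1 - Real.cos θ^2)) * hs

lemma cube_expand (a b θ : ℝ) :
    (a * cos θ + b * cos (2*θ))^3 =
      3*a^2*b/4 * cos (0*θ)
      + (3*a^3/4 + 3*a*b^2/2) * cos (1*θ)
      + (3*a^2*b/2 + 3*b^3/4) * cos (2*θ)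
      + (a^3/4 + 3*a*b^2/4) * cos (3*θ)
      + (3*a^2*b/4) * cos (4*θ)
      + (3*a*b^2/4) * cos (5*θ)
      + (b^3/4) * cos (6*θ) := by
  rw [zero_mul, Real.cos_zero, one_mul, Real.cos_two_mul, Real.cos_three_mul, cos4', cos5', cos6']
  ring

lemma H_sum {H : ℝ → (ℝ → ℝ) → (ℝ → ℝ)} (hH_lin : ∀ τ : ℝ, IsLinearMap ℝ (H τ))
    (hH_cos : ∀ (τ : ℝ) (k : ℤ),
      H τ (fun x => Real.cos ((k : ℝ) * x))
        = fun x => Real.exp (-τ * (k : ℝ) ^ 2) * Real.cos ((k : ℝ) * x))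
    (τ : ℝ) {ι : Type*} (sfin : Finset ι) (c : ι → ℝ) (m : ι → ℤ) :
    H τ (fun y => ∑ i ∈ sfin, c i * Real.cos ((m i : ℝ) * y))
      = fun x => ∑ i ∈ sfin, c i * Real.exp (-τ * (m i : ℝ) ^ 2) * Real.cos ((m i : ℝ) * x) := by
  let L : (ℝ → ℝ) →ₗ[ℝ] (ℝ → ℝ) := IsLinearMap.mk' (H τ) (hH_lin τ)
  have h1 : (fun y => ∑ i ∈ sfin, c i * Real.cos ((m i : ℝ) * y))
      = ∑ i ∈ sfin, c i • (fun y => Real.cos ((m i : ℝ) * y)) := by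
    funext y
    simp [Finset.sum_apply, smul_eq_mul]
  have h2 : H τ (fun y => ∑ i ∈ sfin, c i * Real.cos ((m i : ℝ) * y))
      = L (∑ i ∈ sfin, c i • (fun y => Real.cos ((m i : ℝ) * y))) := by rw [h1]; rfl
  rw [h2, map_sum]
  funext x
  rw [Finset.sum_apply]
  refine Finset.sum_congr rfl fun i _ => ?_
  rw [map_smul]
  have h3 : L (fun y => Real.cos ((m i : ℝ) * y)) = H τ (fun y => Real.cos ((m i : ℝ) * y)) := rfl
  rw [Pi.smul_apply, h3, hH_cos τ (m i)]
  simp [smul_eq_mul]; ring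

lemma integral_cos_int (k : ℤ) (hk : k ≠ 0) :
    ∫ x in (0:ℝ)..(2*π), Real.cos ((k:ℝ)*x) = 0 := by
  have hk' : (k:ℝ) ≠ 0 := Int.cast_ne_zero.mpr hk
  rw [intervalIntegral.integral_comp_mul_left Real.cos hk']
  rw [integral_cos]
  have h1 : (k:ℝ) * (2*π) = ((2*k : ℤ):ℝ) * π := by push_cast; ring
  rw [h1]
  have h2 : Real.sin (((2*k : ℤ):ℝ) * π) = 0 := Real.sin_int_mul_pi _
  push_cast at h2
  simp [h2]

lemma integral_exp_mul' (k : ℝ) (hk : k ≠ 0) (t : ℝ) :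
    ∫ x in (0:ℝ)..t, Real.exp (k*x) = (Real.exp (k*t) - 1)/k := by
  have h : ∀ x ∈ Set.uIcc (0:ℝ) t, HasDerivAt (fun x => Real.exp (k*x)/k) (Real.exp (k*x)) x := by
    intro x _
    have h1 : HasDerivAt (fun x : ℝ => k*x) k x := by
      simpa using (hasDerivAt_id x).const_mul k
    have h3 := h1.exp.div_const k
    simpa [mul_div_assoc, mul_div_cancel_right₀, hk] using h3
  rw [intervalIntegral.integral_eq_sub_of_hasDerivAt h
    ((Real.continuous_exp.comp (continuous_const.mul continuous_id)).intervalIntegrable _ _)]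
  simp [sub_div]

noncomputable def picardA (N : ℕ) (s ε t' : ℝ) : ℝ :=
  (N:ℝ)^(-s-ε) * Real.exp (-t' * (N:ℝ)^2)

noncomputable def picardB (N : ℕ) (s ε t' : ℝ) : ℝ :=
  (N:ℝ)^(-s-ε) * Real.exp (-t' * (2*(N:ℝ))^2)

noncomputable def picardC (N : ℕ) (s ε t' : ℝ) : Fin 7 → ℝ :=
  ![3*(picardA N s ε t')^2*(picardB N s ε t')/4,
    3*(picardA N s ε t')^3/4 + 3*(picardA N s ε t')*(picardB N s ε t')^2/2,
    3*(picardA N s ε t')^2*(picardB N s ε t')/2 + 3*(picardB N s ε t')^3/4,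
    (picardA N s ε t')^3/4 + 3*(picardA N s ε t')*(picardB N s ε t')^2/4,
    3*(picardA N s ε t')^2*(picardB N s ε t')/4,
    3*(picardA N s ε t')*(picardB N s ε t')^2/4,
    (picardB N s ε t')^3/4]

def picardM (N : ℕ) : Fin 7 → ℤ := fun i => (i.val : ℤ) * N


lemma picardM0 (N : ℕ) : picardM N 0 = 0 := by simp [picardM]
lemma picardM1 (N : ℕ) : picardM N 1 = N := by simp [picardM]
lemma picardM2 (N : ℕ) : picardM N 2 = 2*N := rfl
lemma picardM3 (N : ℕ) : picardM N 3 = 3*N := rfl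
lemma picardM4 (N : ℕ) : picardM N 4 = 4*N := rfl
lemma picardM5 (N : ℕ) : picardM N 5 = 5*N := rfl
lemma picardM6 (N : ℕ) : picardM N 6 = 6*N := rfl

lemma picardC0 (N : ℕ) (s ε t' : ℝ) :
    picardC N s ε t' 0 = 3*(picardA N s ε t')^2*(picardB N s ε t')/4 := rfl
lemma picardC1 (N : ℕ) (s ε t' : ℝ) :
    picardC N s ε t' 1 = 3*(picardA N s ε t')^3/4 + 3*(picardA N s ε t')*(picardB N s ε t')^2/2 := rfl
lemma picardC2 (N : ℕ) (s ε t' : ℝ) :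
    picardC N s ε t' 2 = 3*(picardA N s ε t')^2*(picardB N s ε t')/2 + 3*(picardB N s ε t')^3/4 := rfl
lemma picardC3 (N : ℕ) (s ε t' : ℝ) :
    picardC N s ε t' 3 = (picardA N s ε t')^3/4 + 3*(picardA N s ε t')*(picardB N s ε t')^2/4 := rfl
lemma picardC4 (N : ℕ) (s ε t' : ℝ) :
    picardC N s ε t' 4 = 3*(picardA N s ε t')^2*(picardB N s ε t')/4 := rfl
lemma picardC5 (N : ℕ) (s ε t' : ℝ) :
    picardC N s ε t' 5 = 3*(picardA N s ε t')*(picardB N s ε t')^2/4 := rfl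
lemma picardC6 (N : ℕ) (s ε t' : ℝ) :
    picardC N s ε t' 6 = (picardB N s ε t')^3/4 := rfl

section Aux

variable {N : ℕ} {s ε : ℝ} {H : ℝ → (ℝ → ℝ) → (ℝ → ℝ)}
  (hH_lin : ∀ τ : ℝ, IsLinearMap ℝ (H τ))
  (hH_cos : ∀ (τ : ℝ) (k : ℤ),
    H τ (fun x => Real.cos ((k : ℝ) * x))
      = fun x => Real.exp (-τ * (k : ℝ) ^ 2) * Real.cos ((k : ℝ) * x))
  {u₀ : ℝ → ℝ}
  (hu₀ : u₀ = fun x => (N : ℝ) ^ (-s - ε) *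
    (Real.cos ((N : ℝ) * x) + Real.cos (2 * (N : ℝ) * x)))

include hH_lin hH_cos hu₀ in
lemma Hu (t' : ℝ) : H t' u₀ = fun x =>
    picardA N s ε t' * Real.cos ((N:ℝ)*x) + picardB N s ε t' * Real.cos (2*(N:ℝ)*x) := by
  have e1 : u₀ = fun x => ∑ i : Fin 2,
      (fun _ : Fin 2 => (N:ℝ)^(-s-ε)) i * Real.cos (((![(N:ℤ), 2*N]) i : ℝ) * x) := by
    funext x
    rw [hu₀]
    rw [Fin.sum_univ_two]
    simp only [Matrix.cons_val_zero, Matrix.cons_val_one, Matrix.head_cons]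
    push_cast
    ring
  rw [e1, H_sum hH_lin hH_cos]
  funext x
  rw [Fin.sum_univ_two]
  simp only [Matrix.cons_val_zero, Matrix.cons_val_one, Matrix.head_cons, picardA, picardB]
  push_cast
  ring

include hH_lin hH_cos hu₀ in
lemma cube (t' : ℝ) : (fun y => (H t' u₀ y)^3)
    = fun y => ∑ i : Fin 7, picardC N s ε t' i * Real.cos ((picardM N i : ℝ) * y) := by
  funext y
  simp only [Hu hH_lin hH_cos hu₀ t']
  have key := cube_expand (picardA N s ε t') (picardB N s ε t') ((N:ℝ)*y)
  rw [Fin.sum_univ_seven]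
  simp only [picardC0, picardC1, picardC2, picardC3, picardC4, picardC5, picardC6,
    picardM0, picardM1, picardM2, picardM3, picardM4, picardM5, picardM6]
  push_cast
  ring_nf
  ring_nf at key
  linarith [key]

include hH_lin hH_cos hu₀ in
lemma HXi (t t' : ℝ) : H (t - t') (fun y => (H t' u₀ y)^3)
    = fun x => ∑ i : Fin 7, picardC N s ε t' i * Real.exp (-(t-t') * (picardM N i : ℝ)^2)
        * Real.cos ((picardM N i : ℝ) * x) := by
  rw [cube hH_lin hH_cos hu₀ t', H_sum hH_lin hH_cos]

end Aux

/-- The spatial mean of the second Picard iterate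
`Ξ₁(u₀)(t) = ∫₀ᵗ e^{(t-t')Δ}(e^{t'Δ}u₀)³ dt'` on the one-dimensional torus, for
`u₀(x) = N^{-s-ε}(cos(Nx) + cos(2Nx))`, where the heat semigroup `H τ = e^{τΔ}` is
encoded as a linear operator multiplying the mode `cos(kx)` by `e^{-τk²}`. -/
theorem mean_of_second_picard_iterate (N : ℕ) (hN : 1 ≤ N) (s ε : ℝ)
    (H : ℝ → (ℝ → ℝ) → (ℝ → ℝ))
    (hH_lin : ∀ τ : ℝ, IsLinearMap ℝ (H τ))
    (hH_cos : ∀ (τ : ℝ) (k : ℤ),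
      H τ (fun x => Real.cos ((k : ℝ) * x))
        = fun x => Real.exp (-τ * (k : ℝ) ^ 2) * Real.cos ((k : ℝ) * x))
    (u₀ : ℝ → ℝ)
    (hu₀ : u₀ = fun x => (N : ℝ) ^ (-s - ε) *
      (Real.cos ((N : ℝ) * x) + Real.cos (2 * (N : ℝ) * x)))
    (Ξ₁ : ℝ → ℝ → ℝ)
    (hΞ₁ : ∀ t x, Ξ₁ t x = ∫ t' in (0 : ℝ)..t, H (t - t') (fun y => (H t' u₀ y) ^ 3) x)
    (t : ℝ) (ht : 0 ≤ t) :
    (1 / (2 * π)) * ∫ x in (0 : ℝ)..(2 * π), Ξ₁ t x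
      = (1 / 8) * (N : ℝ) ^ (-2 - 3 * s - 3 * ε) * (1 - Real.exp (-6 * t * (N : ℝ) ^ 2)) := by
  have hNR : (0:ℝ) < (N:ℝ) := by exact_mod_cast Nat.lt_of_lt_of_le Nat.zero_lt_one hN
  have hA : Continuous (picardA N s ε) := by unfold picardA; fun_prop
  have hB : Continuous (picardB N s ε) := by unfold picardB; fun_prop
  have contC : ∀ i : Fin 7, Continuous fun t' => picardC N s ε t' i := by
    intro i
    fin_cases i
    · show Continuous fun t' => 3*(picardA N s ε t')^2*(picardB N s ε t')/4
      fun_prop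
    · show Continuous fun t' => 3*(picardA N s ε t')^3/4 + 3*(picardA N s ε t')*(picardB N s ε t')^2/2
      fun_prop
    · show Continuous fun t' => 3*(picardA N s ε t')^2*(picardB N s ε t')/2 + 3*(picardB N s ε t')^3/4
      fun_prop
    · show Continuous fun t' => (picardA N s ε t')^3/4 + 3*(picardA N s ε t')*(picardB N s ε t')^2/4
      fun_prop
    · show Continuous fun t' => 3*(picardA N s ε t')^2*(picardB N s ε t')/4
      fun_prop
    · show Continuous fun t' => 3*(picardA N s ε t')*(picardB N s ε t')^2/4
      fun_prop
    · show Continuous fun t' => (picardB N s ε t')^3/4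
      fun_prop
  have hXi : ∀ x, Ξ₁ t x = ∑ i : Fin 7,
      (∫ t' in (0:ℝ)..t, picardC N s ε t' i * Real.exp (-(t-t') * (picardM N i : ℝ)^2))
        * Real.cos ((picardM N i : ℝ) * x) := by
    intro x
    rw [hΞ₁]
    have e1 : ∫ t' in (0:ℝ)..t, H (t - t') (fun y => (H t' u₀ y)^3) x
        = ∫ t' in (0:ℝ)..t, ∑ i : Fin 7, picardC N s ε t' i
            * Real.exp (-(t-t') * (picardM N i : ℝ)^2) * Real.cos ((picardM N i : ℝ) * x) := by
      apply intervalIntegral.integral_congr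
      intro t' _
      simp only [HXi hH_lin hH_cos hu₀ t t']
    rw [e1, intervalIntegral.integral_finset_sum]
    · exact Finset.sum_congr rfl fun i _ => intervalIntegral.integral_mul_const _ _
    · intro i _
      apply Continuous.intervalIntegrable
      exact ((contC i).mul (by fun_prop)).mul continuous_const
  have hzero : ∀ i : Fin 7, i ≠ 0 → ∫ x in (0:ℝ)..(2*π), Real.cos ((picardM N i : ℝ) * x) = 0 := by
    intro i hi
    apply integral_cos_int
    have h1 : i.val ≠ 0 := by
      intro h
      exact hi (Fin.ext h)
    unfold picardM
    apply mul_ne_zero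
    · exact_mod_cast h1
    · exact_mod_cast (by omega : N ≠ 0)
  have h0 : ∫ x in (0:ℝ)..(2*π), Real.cos ((picardM N 0 : ℝ) * x) = 2*π := by
    simp [picardM0]
  have hmean : ∫ x in (0:ℝ)..(2*π), Ξ₁ t x
      = (∫ t' in (0:ℝ)..t, picardC N s ε t' 0 * Real.exp (-(t-t') * (picardM N 0 : ℝ)^2)) * (2*π) := by
    simp only [hXi]
    have hInt : ∀ i ∈ (Finset.univ : Finset (Fin 7)), IntervalIntegrable
        (fun x => (∫ t' in (0:ℝ)..t, picardC N s ε t' i * Real.exp (-(t-t') * (picardM N i : ℝ)^2))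
          * Real.cos ((picardM N i : ℝ) * x)) MeasureTheory.volume 0 (2*π) :=
      fun i _ => (continuous_const.mul (by fun_prop)).intervalIntegrable _ _
    rw [intervalIntegral.integral_finset_sum hInt]
    have hterm : ∀ i : Fin 7,
        ∫ x in (0:ℝ)..(2*π),
          (∫ t' in (0:ℝ)..t, picardC N s ε t' i * Real.exp (-(t-t') * (picardM N i : ℝ)^2))
            * Real.cos ((picardM N i : ℝ) * x)
        = (∫ t' in (0:ℝ)..t, picardC N s ε t' i * Real.exp (-(t-t') * (picardM N i : ℝ)^2))
            * ∫ x in (0:ℝ)..(2*π), Real.cos ((picardM N i : ℝ) * x) :=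
      fun i => intervalIntegral.integral_const_mul _ _
    rw [Fin.sum_univ_seven, hterm 0, hterm 1, hterm 2, hterm 3, hterm 4, hterm 5, hterm 6,
      hzero 1 (by decide), hzero 2 (by decide), hzero 3 (by decide), hzero 4 (by decide),
      hzero 5 (by decide), hzero 6 (by decide), h0]
    ring
  have hk : (-(6*(N:ℝ)^2)) ≠ 0 := neg_ne_zero.mpr (by positivity)
  have hint : ∀ t' : ℝ, picardC N s ε t' 0 * Real.exp (-(t-t') * (picardM N 0 : ℝ)^2)
      = (3*((N:ℝ)^(-s-ε))^3/4) * Real.exp ((-(6*(N:ℝ)^2)) * t') := by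
    intro t'
    simp only [picardC0, picardM0, picardA, picardB, Int.cast_zero]
    rw [show (-(t-t') * (0:ℝ)^2) = 0 by ring, Real.exp_zero, mul_one]
    have h2 : Real.exp (-t'*(N:ℝ)^2)^2 * Real.exp (-t'*(2*(N:ℝ))^2)
        = Real.exp ((-(6*(N:ℝ)^2)) * t') := by
      rw [sq, ← Real.exp_add, ← Real.exp_add]
      ring_nf
    linear_combination (3*((N:ℝ)^(-s-ε))^3/4) * h2
  have hrpow : (N:ℝ)^(-2-3*s-3*ε) * (N:ℝ)^2 = ((N:ℝ)^(-s-ε))^3 := by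
    rw [← Real.rpow_natCast ((N:ℝ)^(-s-ε)) 3, ← Real.rpow_mul hNR.le,
      ← Real.rpow_natCast (N:ℝ) 2, ← Real.rpow_add hNR]
    congr 1
    push_cast
    ring
  have hexp : Real.exp ((-(6*(N:ℝ)^2)) * t) = Real.exp (-6*t*(N:ℝ)^2) := by ring_nf
  rw [hmean]
  simp only [hint]
  rw [intervalIntegral.integral_const_mul, integral_exp_mul' _ hk t, hexp]
  have hπ : π ≠ 0 := Real.pi_ne_zero
  have hn2 : ((N:ℝ)^2) ≠ 0 := by positivity
  field_simp
  rw [show -(6*t*(N:ℝ)^2) = -6*t*(N:ℝ)^2 by ring]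
  linear_combination (24*Real.exp (-6*t*(N:ℝ)^2) - 24) * hrpow
end
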